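/- Suppose EC has a unique maximal eigenvalue λ₁ of multiplicity one and all eigenvalues of EC are positive. An equilibrium w (with ECw = λ_w w, wᵀCw = λ_w) is a hyperbolic attractor of the Oja flow (all eigenvalues of its Jacobian are strictly negative) if and only if λ_w = λ₁. -/

import Mathlib

open Matrix

private lemma vecMulVec_mulVec' {n : ℕ} (a c v : Fin n → ℝ) :
    (vecMulVec a c) *ᵥ v = (c ⬝ᵥ v) • a := by
  ext i
  simp only [Matrix.mulVec, dotProduct, vecMulVec_apply, Pi.smul_apply, smul_eq_mul,
    Finset.sum_mul]
  exact Finset.sum_congr rfl fun j _ => by ring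

private lemma repr_eig {n : ℕ} (b : Module.Basis (Fin n) ℝ (Fin n → ℝ))
    (f : (Fin n → ℝ) →ₗ[ℝ] (Fin n → ℝ)) (ν : Fin n → ℝ)
    (hb : ∀ j, f (b j) = ν j • b j) (v : Fin n → ℝ) (j : Fin n) :
    b.repr (f v) j = ν j * b.repr v j := by
  have hfv : f v = ∑ i, (ν i * b.repr v i) • b i := by
    conv_lhs => rw [← b.sum_repr v]
    rw [map_sum]
    exact Finset.sum_congr rfl fun i _ => by
      rw [LinearMap.map_smul, hb i, smul_smul, mul_comm]
  rw [hfv, map_sum, Finsupp.finset_sum_apply]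
  simp only [LinearEquiv.map_smul, Finsupp.smul_apply, Module.Basis.repr_self_apply, smul_eq_mul]
  rw [Finset.sum_eq_single j]
  · simp
  · intro i _ hij; simp [hij]
  · simp

theorem stmt10 (n : ℕ) (C E : Matrix (Fin n) (Fin n) ℝ)
    (hC : C.PosDef) (hCs : C.IsSymm) (hEs : E.IsSymm)
    (γ : ℝ) (hγ : 0 < γ)
    (b : Module.Basis (Fin n) ℝ (Fin n → ℝ)) (μ : Fin n → ℝ)
    (heig : ∀ i, (E * C).mulVec (b i) = μ i • b i)
    (horth : ∀ i j, i ≠ j → (b i) ⬝ᵥ (C.mulVec (b j)) = 0)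
    (hpos : ∀ i, 0 < μ i)
    (i₀ : Fin n) (hmax : ∀ j, j ≠ i₀ → μ j < μ i₀)
    (w : Fin n → ℝ) (hw0 : w ≠ 0) (k : Fin n)
    (heqw : (E * C).mulVec w = μ k • w) (hnorm : w ⬝ᵥ C.mulVec w = μ k)
    (J : Matrix (Fin n) (Fin n) ℝ)
    (hJ : J = γ • (E * C - (2 : ℝ) • Matrix.vecMulVec w (C.mulVec w)
      - (μ k) • (1 : Matrix (Fin n) (Fin n) ℝ))) :
    (∀ η : ℝ, Module.End.HasEigenvalue (Matrix.toLin' J) η → η < 0) ↔ μ k = μ i₀ := by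
  -- self-adjointness of E*C w.r.t. the C-inner product
  have hsa : ∀ u v : Fin n → ℝ,
      ((E * C) *ᵥ u) ⬝ᵥ (C *ᵥ v) = u ⬝ᵥ (C *ᵥ ((E * C) *ᵥ v)) := by
    intro u v
    rw [dotProduct_comm, dotProduct_mulVec, ← mulVec_transpose, dotProduct_comm,
      mulVec_mulVec, mulVec_mulVec, transpose_mul, hCs, hEs, Matrix.mul_assoc]
  -- C-orthogonality of w and b j when eigenvalues differ
  have horthw : ∀ j, μ j ≠ μ k → w ⬝ᵥ (C *ᵥ b j) = 0 := by
    intro j hj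
    have h := hsa w (b j)
    rw [heqw, heig j, smul_dotProduct, mulVec_smul, dotProduct_smul] at h
    have h2 : (μ k - μ j) * (w ⬝ᵥ (C *ᵥ b j)) = 0 := by
      rw [sub_mul]; rw [smul_eq_mul, smul_eq_mul] at h; linarith
    rcases mul_eq_zero.mp h2 with h3 | h3
    · exact absurd (by linarith [sub_eq_zero.mp h3] : μ j = μ k) hj
    · exact h3
  -- action of J
  have hJv : ∀ x : Fin n → ℝ, J *ᵥ x =
      γ • ((E * C) *ᵥ x) - (2 * γ * ((C *ᵥ w) ⬝ᵥ x)) • w - (γ * μ k) • x := by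
    intro x
    rw [hJ, smul_mulVec, sub_mulVec, sub_mulVec, smul_mulVec, smul_mulVec,
      one_mulVec, vecMulVec_mulVec']
    rw [smul_sub, smul_sub, smul_smul, smul_smul, smul_smul]
    ring_nf
  have hCwd : ∀ x : Fin n → ℝ, (C *ᵥ w) ⬝ᵥ x = w ⬝ᵥ (C *ᵥ x) := by
    intro x
    rw [dotProduct_comm, dotProduct_mulVec, ← mulVec_transpose, hCs, dotProduct_comm]
  constructor
  · -- all eigenvalues negative → μ k = μ i₀
    intro hall
    by_contra hne
    have hki₀ : k ≠ i₀ := fun h => hne (by rw [h])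
    have hlt : μ k < μ i₀ := hmax k hki₀
    have ho : w ⬝ᵥ (C *ᵥ b i₀) = 0 := horthw i₀ (fun h => hne h.symm)
    have hJb : J *ᵥ b i₀ = (γ * (μ i₀ - μ k)) • b i₀ := by
      rw [hJv, heig i₀, hCwd, ho]
      ext t
      simp only [Pi.sub_apply, Pi.smul_apply, smul_eq_mul]
      ring
    have hev : Module.End.HasEigenvalue (Matrix.toLin' J) (γ * (μ i₀ - μ k)) :=
      Module.End.hasEigenvalue_of_hasEigenvector
        ⟨Module.End.mem_eigenspace_iff.mpr (by rw [Matrix.toLin'_apply, hJb]), b.ne_zero i₀⟩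
    have := hall _ hev
    nlinarith
  · -- μ k = μ i₀ → all eigenvalues negative
    intro hk η hη
    -- w is proportional to b i₀
    have hreprw : ∀ j, j ≠ i₀ → b.repr w j = 0 := by
      intro j hj
      have h1 : b.repr ((E * C).mulVecLin w) j = μ j * b.repr w j :=
        repr_eig b (E * C).mulVecLin μ (fun i => by rw [mulVecLin_apply, heig i]) w j
      rw [mulVecLin_apply, heqw, LinearEquiv.map_smul, Finsupp.smul_apply, smul_eq_mul] at h1
      have hne : μ j ≠ μ k := fun h => absurd (hk ▸ h) (ne_of_lt (hmax j hj))
      have : (μ k - μ j) * b.repr w j = 0 := by rw [sub_mul]; linarith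
      rcases mul_eq_zero.mp this with h3 | h3
      · exact absurd (by linarith [sub_eq_zero.mp h3] : μ j = μ k) hne
      · exact h3
    set c := b.repr w i₀ with hc
    have hw : w = c • b i₀ := by
      conv_lhs => rw [← b.sum_repr w]
      rw [Finset.sum_eq_single i₀]
      · intro i _ hi; rw [hreprw i hi, zero_smul]
      · simp
    have hc0 : c ≠ 0 := fun h => hw0 (by rw [hw, h, zero_smul])
    -- the key inner product
    have hkey : c * ((C *ᵥ w) ⬝ᵥ b i₀) = μ k := by
      have : (C *ᵥ w) ⬝ᵥ (c • b i₀) = μ k := by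
        rw [← hw, dotProduct_comm, ← hnorm]
      rwa [dotProduct_smul, smul_eq_mul] at this
    -- eigenvalue structure of J
    set ν : Fin n → ℝ := fun j => if j = i₀ then -(2 * γ * μ k) else γ * (μ j - μ k) with hν
    have hb : ∀ j, Matrix.toLin' J (b j) = ν j • b j := by
      intro j
      rw [Matrix.toLin'_apply, hJv, heig j, hCwd]
      by_cases hj : j = i₀
      · subst hj
        have hd : w ⬝ᵥ (C *ᵥ b j) = μ k / c := by
          rw [← hCwd]; field_simp; linarith [hkey]
        rw [hd, hν]
        simp only [if_pos rfl]
        rw [hw]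
        ext t
        simp only [Pi.sub_apply, Pi.smul_apply, smul_eq_mul]
        rw [hk]
        field_simp
        rw [if_pos trivial]
        ring
      · rw [horthw j (fun h => absurd (hk ▸ h) (ne_of_lt (hmax j hj))), hν]
        simp only [if_neg hj]
        ext t
        simp only [Pi.sub_apply, Pi.smul_apply, smul_eq_mul]
        ring
    -- η equals one of the ν j
    obtain ⟨v, hv⟩ := hη.exists_hasEigenvector
    have hvrepr : ∀ j, ν j * b.repr v j = η * b.repr v j := by
      intro j
      have h1 := repr_eig b (Matrix.toLin' J) ν hb v j
      rw [hv.apply_eq_smul, LinearEquiv.map_smul, Finsupp.smul_apply, smul_eq_mul] at h1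
      linarith
    have hvne : ∃ j, b.repr v j ≠ 0 := by
      by_contra h
      push_neg at h
      exact hv.2 (by
        have := b.sum_repr v
        rw [Finset.sum_congr rfl (fun i _ => by rw [h i, zero_smul])] at this
        simpa using this.symm)
    obtain ⟨j, hj⟩ := hvne
    have : η = ν j := by
      have := hvrepr j
      exact (mul_right_cancel₀ hj this).symm
    rw [this, hν]
    by_cases hji : j = i₀
    · simp only [if_pos hji]
      have := hpos k
      nlinarith
    · simp only [if_neg hji]
      have := hmax j hji
      rw [← hk] at this
      nlinarith
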